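/- Asymptotic form of the Proposition: fix Q ≥ 1, m ≥ 2 and a sequence of count vectors (n_1^{(k)},...,n_Q^{(k)}) with totals N_k → ∞ and with H_k/N_k bounded below by a positive constant, where H_k = max_i n_i^{(k)}. Then I_{m}^{(k)} / (Z_m^{(k)} / (Z_1^{(k)})^m) → 1 as k → ∞, where I_m^{(k)} = Q^{m-1} Σ_i (n_i^{(k)})^{(m)} / N_k^{(m)} and Z_q^{(k)} = Q^{-1} Σ_i (n_i^{(k)})^q. -/

import Mathlib

open Filter

lemma pow_sub_pow_le_real (m : ℕ) {a b : ℝ} (hb : 0 ≤ b) (hba : b ≤ a) :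
    a ^ (m+1) - b ^ (m+1) ≤ (m+1) * a ^ m * (a - b) := by
  induction m with
  | zero => simp
  | succ p ih =>
    have ha : 0 ≤ a := hb.trans hba
    have h1 : a ^ (p+2) - b ^ (p+2) = a * (a ^ (p+1) - b ^ (p+1)) + (a - b) * b ^ (p+1) := by
      ring
    have h2 : a * (a ^ (p+1) - b ^ (p+1)) ≤ a * ((p+1) * a ^ p * (a - b)) :=
      mul_le_mul_of_nonneg_left ih ha
    have h3 : (a - b) * b ^ (p+1) ≤ (a - b) * a ^ (p+1) :=
      mul_le_mul_of_nonneg_left (pow_le_pow_left₀ hb hba _) (by linarith)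
    have h4 : a * (((p:ℝ) + 1) * a ^ p * (a - b)) + (a - b) * a ^ (p + 1)
        = ((p:ℝ) + 1 + 1) * a ^ (p + 1) * (a - b) := by ring
    push_cast at h2 ⊢
    linarith

lemma key1 (p n : ℕ) :
    (n:ℝ) ^ (p+2) - (n.descFactorial (p+2) : ℝ) ≤ ((p:ℝ)+2) ^ 2 * (n:ℝ) ^ (p+1) := by
  have hpow : (0:ℝ) ≤ (n:ℝ) ^ (p+1) := by positivity
  rcases lt_or_ge n (p+2) with h | h
  · rw [Nat.descFactorial_eq_zero_iff_lt.2 h]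
    have hn : (n:ℝ) ≤ (p:ℝ) + 2 := by exact_mod_cast h.le
    have h1 : (n:ℝ) ^ (p+1) * (n:ℝ) ≤ (n:ℝ) ^ (p+1) * ((p:ℝ)+2) :=
      mul_le_mul_of_nonneg_left hn hpow
    have h2 : (n:ℝ) ^ (p+1) * ((p:ℝ)+2) ≤ (n:ℝ) ^ (p+1) * ((p:ℝ)+2) ^ 2 :=
      mul_le_mul_of_nonneg_left (by nlinarith [Nat.cast_nonneg (α := ℝ) p]) hpow
    have h3 : (n:ℝ) ^ (p+2) = (n:ℝ) ^ (p+1) * (n:ℝ) := by ring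
    rw [h3]
    push_cast
    nlinarith
  · have hdf : ((n + 1 - (p+2) : ℕ) : ℝ) ^ (p+2) ≤ (n.descFactorial (p+2) : ℝ) := by
      exact_mod_cast Nat.pow_sub_le_descFactorial n (p+2)
    have h2 : p + 2 ≤ n + 1 := h.trans (Nat.le_succ n)
    have hcast : ((n + 1 - (p+2) : ℕ) : ℝ) = (n:ℝ) - ((p:ℝ)+1) := by
      rw [Nat.cast_sub h2]; push_cast; ring
    rw [hcast] at hdf
    have hb : (0:ℝ) ≤ (n:ℝ) - ((p:ℝ)+1) := by
      have : (p:ℝ) + 2 ≤ n := by exact_mod_cast h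
      linarith
    have hba : (n:ℝ) - ((p:ℝ)+1) ≤ (n:ℝ) := by
      have : (0:ℝ) ≤ (p:ℝ) + 1 := by positivity
      linarith
    have hmain := pow_sub_pow_le_real (p+1) hb hba
    have hextra : (0:ℝ) ≤ ((p:ℝ)+2) * (n:ℝ) ^ (p+1) :=
      mul_nonneg (by positivity) hpow
    push_cast at hmain ⊢
    nlinarith

lemma sum_pow_le_pow_sum {ι : Type*} (s : Finset ι) (f : ι → ℕ) (q : ℕ) :
    ∑ i ∈ s, f i ^ (q+1) ≤ (∑ i ∈ s, f i) ^ (q+1) := by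
  calc ∑ i ∈ s, f i ^ (q+1) ≤ ∑ i ∈ s, f i * (∑ j ∈ s, f j) ^ q := by
        refine Finset.sum_le_sum fun i hi => ?_
        rw [pow_succ']
        exact Nat.mul_le_mul_left _
          (Nat.pow_le_pow_left (Finset.single_le_sum (fun _ _ => Nat.zero_le _) hi) q)
    _ = (∑ i ∈ s, f i) ^ (q+1) := by rw [← Finset.sum_mul, pow_succ']

lemma alg_id (Q : ℝ) (p : ℕ) (S T D Nr : ℝ) (hQ : Q ≠ 0) (hT : T ≠ 0) (hD : D ≠ 0)
    (hN : Nr ≠ 0) :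
    S / T * (Nr ^ (p+2) / D) = (Q ^ (p+1) * S / D) / ((Q⁻¹ * T) / (Q⁻¹ * Nr) ^ (p+2)) := by
  field_simp
  have hQQ : Q ^ 2 * Q ^ p * Q⁻¹ ^ 2 * Q⁻¹ ^ p = 1 := by
    rw [inv_pow, inv_pow]; field_simp
  linear_combination (-(S * Nr ^ 2 * Nr ^ p)) * hQQ

set_option maxHeartbeats 2000000 in
/-- asymptotic form of the Proposition. If the totals `N_k → ∞` and the
maximal counts satisfy `H_k ≥ c·N_k` for some `c > 0`, then
`I_m^{(k)} / (Z_m^{(k)}/(Z₁^{(k)})^m) → 1`. -/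
theorem mMorisita_asymptotic_moment_ratio (Q m : ℕ) (hQ : 0 < Q) (hm : 2 ≤ m)
    (n : ℕ → Fin Q → ℕ)
    (N : ℕ → ℕ) (hN : ∀ k, N k = ∑ i, n k i)
    (H : ℕ → ℕ) (hH : ∀ k, H k = Finset.univ.sup (n k))
    (hNtop : Tendsto (fun k => N k) atTop atTop)
    (c : ℝ) (hc : 0 < c) (hcH : ∀ k, c * (N k : ℝ) ≤ (H k : ℝ)) :
    Tendsto (fun k =>
        ((Q : ℝ) ^ (m - 1) * (∑ i, ((n k i).descFactorial m : ℝ))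
            / ((N k).descFactorial m : ℝ))
          / (((Q : ℝ)⁻¹ * ∑ i, (n k i : ℝ) ^ m)
              / ((Q : ℝ)⁻¹ * ∑ i, (n k i : ℝ)) ^ m))
      atTop (nhds 1) := by
  obtain ⟨p, rfl⟩ : ∃ p, m = p + 2 := ⟨m - 2, by omega⟩
  have hQR : (0:ℝ) < Q := by exact_mod_cast hQ
  have hNe : Nonempty (Fin Q) := ⟨⟨0, hQ⟩⟩
  obtain ⟨S, hSdef⟩ : ∃ S : ℕ → ℝ, ∀ k, S k = ∑ i, ((n k i).descFactorial (p+2) : ℝ) :=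
    ⟨_, fun _ => rfl⟩
  obtain ⟨T, hTdef⟩ : ∃ T : ℕ → ℝ, ∀ k, T k = ∑ i, (n k i : ℝ) ^ (p+2) :=
    ⟨_, fun _ => rfl⟩
  obtain ⟨D, hDdef⟩ : ∃ D : ℕ → ℝ, ∀ k, D k = ((N k).descFactorial (p+2) : ℝ) :=
    ⟨_, fun _ => rfl⟩
  have hsumcast : ∀ k, ∑ i, (n k i : ℝ) = (N k : ℝ) := by
    intro k; rw [hN k]; push_cast; rfl
  have hev : ∀ᶠ k in atTop, (p+2)^2 + (p+2) + 1 ≤ N k := hNtop.eventually_ge_atTop _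
  have hSleT : ∀ k, S k ≤ T k := by
    intro k
    rw [hSdef k, hTdef k]
    refine Finset.sum_le_sum fun i _ => ?_
    exact_mod_cast Nat.descFactorial_le_pow _ _
  have hTpos : ∀ k, 1 ≤ N k → c ^ (p+2) * (N k:ℝ) ^ (p+2) ≤ T k := by
    intro k hk
    obtain ⟨i, -, hi⟩ := Finset.exists_mem_eq_sup (Finset.univ : Finset (Fin Q))
      Finset.univ_nonempty (n k)
    have h1 : (c * (N k:ℝ)) ^ (p+2) ≤ (n k i : ℝ) ^ (p+2) := by
      apply pow_le_pow_left₀ (mul_nonneg hc.le (Nat.cast_nonneg _))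
      rw [← hi, ← hH k]; exact hcH k
    have h2 : (n k i : ℝ) ^ (p+2) ≤ T k := by
      rw [hTdef k]
      exact Finset.single_le_sum (f := fun j => (n k j : ℝ) ^ (p+2))
        (fun j _ => by positivity) (Finset.mem_univ i)
    calc c ^ (p+2) * (N k:ℝ) ^ (p+2) = (c * (N k:ℝ)) ^ (p+2) := (mul_pow _ _ _).symm
      _ ≤ T k := h1.trans h2
  have hTS : ∀ k, T k - S k ≤ ((p:ℝ)+2)^2 * (N k:ℝ)^(p+1) := by
    intro k
    have h1 : T k - S k = ∑ i, ((n k i : ℝ) ^ (p+2) - ((n k i).descFactorial (p+2) : ℝ)) := by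
      rw [hTdef k, hSdef k, Finset.sum_sub_distrib]
    have h2 : ∑ i, ((n k i : ℝ) ^ (p+2) - ((n k i).descFactorial (p+2) : ℝ))
        ≤ ∑ i, ((p:ℝ)+2)^2 * (n k i : ℝ)^(p+1) :=
      Finset.sum_le_sum fun i _ => key1 p (n k i)
    have h4 : ∑ i, (n k i : ℝ)^(p+1) ≤ (N k:ℝ)^(p+1) := by
      have h := sum_pow_le_pow_sum (Finset.univ : Finset (Fin Q)) (n k) p
      rw [hN k]
      exact_mod_cast h
    have h5 : ((p:ℝ)+2)^2 * ∑ i, (n k i : ℝ)^(p+1) ≤ ((p:ℝ)+2)^2 * (N k:ℝ)^(p+1) :=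
      mul_le_mul_of_nonneg_left h4 (by positivity)
    rw [h1]
    calc _ ≤ ∑ i, ((p:ℝ)+2)^2 * (n k i : ℝ)^(p+1) := h2
      _ = ((p:ℝ)+2)^2 * ∑ i, (n k i : ℝ)^(p+1) := by rw [Finset.mul_sum]
      _ ≤ _ := h5
  have hDkey : ∀ k, (N k:ℝ)^(p+2) - D k ≤ ((p:ℝ)+2)^2 * (N k:ℝ)^(p+1) := by
    intro k; rw [hDdef k]; exact key1 p (N k)
  have hDle : ∀ k, D k ≤ (N k:ℝ)^(p+2) := by
    intro k
    have h := Nat.descFactorial_le_pow (N k) (p+2)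
    calc D k = ((N k).descFactorial (p+2) : ℝ) := hDdef k
      _ ≤ (((N k)^(p+2) : ℕ) : ℝ) := by exact_mod_cast h
      _ = (N k:ℝ)^(p+2) := by push_cast; rfl
  obtain ⟨A, hAdef⟩ : ∃ A : ℕ → ℝ, ∀ k, A k = S k / T k := ⟨_, fun _ => rfl⟩
  obtain ⟨B, hBdef⟩ : ∃ B : ℕ → ℝ, ∀ k, B k = (N k:ℝ)^(p+2) / D k := ⟨_, fun _ => rfl⟩
  have hinvN : Tendsto (fun k => ((N k:ℝ))⁻¹) atTop (nhds 0) :=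
    (tendsto_natCast_atTop_atTop.comp hNtop).inv_tendsto_atTop
  have hAto : Tendsto A atTop (nhds 1) := by
    have hlow : Tendsto (fun k => 1 - (((p:ℝ)+2)^2 / c^(p+2)) * ((N k:ℝ))⁻¹) atTop (nhds 1) := by
      have h1 := hinvN.const_mul (((p:ℝ)+2)^2 / c^(p+2))
      have h2 := (tendsto_const_nhds (x := (1:ℝ)) (f := atTop)).sub h1
      simpa using h2
    refine tendsto_of_tendsto_of_tendsto_of_le_of_le' hlow tendsto_const_nhds ?_ ?_
    · filter_upwards [hev] with k hk
      have hN1 : (1:ℝ) ≤ (N k:ℝ) := by exact_mod_cast (show 1 ≤ N k by omega)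
      have hNpos : (0:ℝ) < (N k:ℝ) := by linarith
      have hTp : (0:ℝ) < T k :=
        lt_of_lt_of_le (mul_pos (pow_pos hc _) (pow_pos hNpos _)) (hTpos k (by omega))
      have h1 : (T k - S k) / T k ≤ (((p:ℝ)+2)^2 * (N k:ℝ)^(p+1)) / (c^(p+2) * (N k:ℝ)^(p+2)) :=
        div_le_div₀ (by positivity) (hTS k)
          (mul_pos (pow_pos hc _) (pow_pos hNpos _)) (hTpos k (by omega))
      have h2 : (((p:ℝ)+2)^2 * (N k:ℝ)^(p+1)) / (c^(p+2) * (N k:ℝ)^(p+2))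
          = (((p:ℝ)+2)^2 / c^(p+2)) * ((N k:ℝ))⁻¹ := by
        field_simp
        ring
      rw [h2] at h1
      have h3 : (T k - S k) / T k = 1 - A k := by
        rw [hAdef k, sub_div, div_self hTp.ne']
      rw [h3] at h1
      linarith
    · filter_upwards [hev] with k hk
      have hN1 : (1:ℝ) ≤ (N k:ℝ) := by exact_mod_cast (show 1 ≤ N k by omega)
      have hNpos : (0:ℝ) < (N k:ℝ) := by linarith
      have hTp : (0:ℝ) < T k :=
        lt_of_lt_of_le (mul_pos (pow_pos hc _) (pow_pos hNpos _)) (hTpos k (by omega))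
      rw [hAdef k]
      exact div_le_one_of_le₀ (hSleT k) hTp.le
  have hBto : Tendsto B atTop (nhds 1) := by
    have hup : Tendsto (fun k => (1 - ((p:ℝ)+2)^2 * ((N k:ℝ))⁻¹)⁻¹) atTop (nhds 1) := by
      have h1 : Tendsto (fun k => 1 - ((p:ℝ)+2)^2 * ((N k:ℝ))⁻¹) atTop (nhds 1) := by
        have h0 := hinvN.const_mul (((p:ℝ)+2)^2)
        have h2 := (tendsto_const_nhds (x := (1:ℝ)) (f := atTop)).sub h0
        simpa using h2
      simpa using h1.inv₀ one_ne_zero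
    refine tendsto_of_tendsto_of_tendsto_of_le_of_le' tendsto_const_nhds hup ?_ ?_
    · filter_upwards [hev] with k hk
      have hDpos : (0:ℝ) < D k := by
        have h : 0 < (N k).descFactorial (p+2) := Nat.pos_of_ne_zero (by
          rw [Ne, Nat.descFactorial_eq_zero_iff_lt]; omega)
        rw [hDdef k]; exact_mod_cast h
      rw [hBdef k]
      exact (one_le_div hDpos).2 (hDle k)
    · filter_upwards [hev] with k hk
      have hNbig : ((p:ℝ)+2)^2 + 1 ≤ (N k:ℝ) := by
        have h : (p+2)^2 + 1 ≤ N k := by omega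
        exact_mod_cast h
      have hNpos : (0:ℝ) < (N k:ℝ) := by nlinarith [sq_nonneg ((p:ℝ)+2)]
      have heps : (0:ℝ) < 1 - ((p:ℝ)+2)^2 * ((N k:ℝ))⁻¹ := by
        have h1 : ((p:ℝ)+2)^2 * ((N k:ℝ))⁻¹ < 1 := by
          rw [mul_inv_lt_iff₀ hNpos]
          linarith
        linarith
      have hDpos : (0:ℝ) < D k := by
        have h : 0 < (N k).descFactorial (p+2) := Nat.pos_of_ne_zero (by
          rw [Ne, Nat.descFactorial_eq_zero_iff_lt]; omega)
        rw [hDdef k]; exact_mod_cast h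
      have hDlow : (N k:ℝ)^(p+2) * (1 - ((p:ℝ)+2)^2 * ((N k:ℝ))⁻¹) ≤ D k := by
        have heq : (N k:ℝ)^(p+2) * (1 - ((p:ℝ)+2)^2 * ((N k:ℝ))⁻¹)
            = (N k:ℝ)^(p+2) - ((p:ℝ)+2)^2 * (N k:ℝ)^(p+1) := by
          field_simp
          ring
        rw [heq]
        linarith [hDkey k]
      have hposL : (0:ℝ) < (N k:ℝ)^(p+2) * (1 - ((p:ℝ)+2)^2 * ((N k:ℝ))⁻¹) :=
        mul_pos (pow_pos hNpos _) heps
      have hle := div_le_div_of_nonneg_left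
        (by positivity : (0:ℝ) ≤ (N k:ℝ)^(p+2)) hposL hDlow
      calc B k ≤ (N k:ℝ)^(p+2) / ((N k:ℝ)^(p+2) * (1 - ((p:ℝ)+2)^2 * ((N k:ℝ))⁻¹)) := by
            rw [hBdef k]; exact hle
        _ = (1 - ((p:ℝ)+2)^2 * ((N k:ℝ))⁻¹)⁻¹ := by
            rw [div_mul_eq_div_div, div_self (pow_pos hNpos _).ne', one_div]
  have hAB : Tendsto (fun k => A k * B k) atTop (nhds 1) := by
    simpa using hAto.mul hBto
  refine hAB.congr' ?_
  filter_upwards [hev] with k hk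
  have hN1 : (1:ℝ) ≤ (N k:ℝ) := by exact_mod_cast (show 1 ≤ N k by omega)
  have hNpos : (0:ℝ) < (N k:ℝ) := by linarith
  have hTp : (0:ℝ) < T k :=
    lt_of_lt_of_le (mul_pos (pow_pos hc _) (pow_pos hNpos _)) (hTpos k (by omega))
  have hDpos : (0:ℝ) < D k := by
    have h : 0 < (N k).descFactorial (p+2) := Nat.pos_of_ne_zero (by
      rw [Ne, Nat.descFactorial_eq_zero_iff_lt]; omega)
    rw [hDdef k]; exact_mod_cast h
  rw [hAdef k, hBdef k, hsumcast k, show p + 2 - 1 = p + 1 from rfl,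
    hSdef k, hTdef k, hDdef k]
  have := alg_id (Q:ℝ) p (∑ i, ((n k i).descFactorial (p+2) : ℝ))
    (∑ i, (n k i : ℝ) ^ (p+2)) (((N k).descFactorial (p+2) : ℝ)) (N k:ℝ)
    hQR.ne' (by rw [← hTdef k]; exact hTp.ne') (by rw [← hDdef k]; exact hDpos.ne') hNpos.ne'
  exact this
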